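/- Let σ: ℝ → ℝ be the ReLU activation σ(x) = max{x,0}. Then for any R ∈ ℕ and any a ≥ 1 there exists a feedforward ReLU network f̂_{sq} ∈ F(R,9) whose weight vector satisfies ‖v_{f̂_{sq}}‖_∞ = ‖(v_{f̂_{sq}})^{(R)}‖_∞ ≤ 4·a² and ‖(v_{f̂_{sq}})^{(0)}‖_∞ ≤ 1, such that |f̂_{sq}(x) − x²| ≤ a²·4^{−R} for all x ∈ [−a,a]. -/

import Mathlib

open Finset

noncomputable section

/-- Output `g_i^{(l)}(x)` of neuron `i` in layer `l` of a feedforward ReLU network with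
input dimension `d` (coordinates `x 1, …, x d`), `r` neurons per hidden layer and
weights `v l i j = v_{i,j}^{(l)}`. -/
def fnnNeuron (d r : ℕ) (v : ℕ → ℕ → ℕ → ℝ) (x : ℕ → ℝ) : ℕ → ℕ → ℝ
  | 0, j => x j
  | (l + 1), i =>
      max 0 (v l i 0 +
        ∑ j ∈ Finset.Icc 1 (if l = 0 then d else r), v l i j * fnnNeuron d r v x l j)

/-- Output of the feedforward ReLU network with `L` hidden layers of `r` neurons each,
input dimension `d` and weight vector `v` (the class `F(L,r)`). -/
def fnnEval (d r L : ℕ) (v : ℕ → ℕ → ℕ → ℝ) (x : ℕ → ℝ) : ℝ :=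
  v L 1 0 + ∑ i ∈ Finset.Icc 1 r, v L 1 i * fnnNeuron d r v x L i

/-- The indices `(l, i, j)` of the weights `v_{i,j}^{(l)}` actually used by a network
in `F(L,r)` with input dimension `d`. -/
def RelW (d r L : ℕ) (l i j : ℕ) : Prop :=
  (l < L ∧ 1 ≤ i ∧ i ≤ r ∧ j ≤ (if l = 0 then d else r)) ∨
    (l = L ∧ i = 1 ∧ j ≤ (if L = 0 then d else r))

/-- Supremum of `|v l i j|` over all indices satisfying the predicate `Pred`
(e.g. the supremum norm of (part of) a weight vector). -/
def wsup (Pred : ℕ → ℕ → ℕ → Prop) (v : ℕ → ℕ → ℕ → ℝ) : ℝ :=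
  sSup {y : ℝ | ∃ l i j, Pred l i j ∧ y = |v l i j|}




def gt1 (y : ℝ) : ℝ := 2 * max 0 y - 4 * max 0 (y - 1/2) + 2 * max 0 (y - 1)

def gI : ℕ → ℝ → ℝ
  | 0, y => y
  | (s+1), y => gI s (gt1 y)

def fI (m : ℕ) (y : ℝ) : ℝ := y - ∑ s ∈ Finset.Icc 1 m, gI s y / 4 ^ s

lemma gt1_left {y : ℝ} (h0 : 0 ≤ y) (h1 : y ≤ 1/2) : gt1 y = 2 * y := by
  unfold gt1
  rw [max_eq_right h0, max_eq_left (by linarith), max_eq_left (by linarith)]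
  ring

lemma gt1_right {y : ℝ} (h0 : 1/2 ≤ y) (h1 : y ≤ 1) : gt1 y = 2 - 2 * y := by
  unfold gt1
  rw [max_eq_right (by linarith), max_eq_right (by linarith), max_eq_left (by linarith)]
  ring

lemma gt1_mem {y : ℝ} (h : y ∈ Set.Icc (0:ℝ) 1) : gt1 y ∈ Set.Icc (0:ℝ) 1 := by
  obtain ⟨h0, h1⟩ := h
  rcases le_or_gt y (1/2) with h | h
  · rw [gt1_left h0 h]; constructor <;> linarith
  · rw [gt1_right h.le h1]; constructor <;> linarith

lemma gt1_quad {y : ℝ} (h : y ∈ Set.Icc (0:ℝ) 1) :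
    (gt1 y)^2 / 4 - gt1 y / 2 = y^2 - y := by
  obtain ⟨h0, h1⟩ := h
  rcases le_or_gt y (1/2) with h | h
  · rw [gt1_left h0 h]; ring
  · rw [gt1_right h.le h1]; ring

lemma gI_mem {y : ℝ} (h : y ∈ Set.Icc (0:ℝ) 1) (s : ℕ) : gI s y ∈ Set.Icc (0:ℝ) 1 := by
  induction s generalizing y with
  | zero => exact h
  | succ s ih => exact ih (gt1_mem h)

lemma gI_comm (s : ℕ) (y : ℝ) : gI s (gt1 y) = gt1 (gI s y) := by
  induction s generalizing y with
  | zero => rfl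
  | succ s ih => show gI s (gt1 (gt1 y)) = gt1 (gI s (gt1 y)); rw [ih]

lemma fI_succ (m : ℕ) (y : ℝ) : fI (m+1) y = fI m y - gI (m+1) y / 4 ^ (m+1) := by
  unfold fI
  rw [Finset.sum_Icc_succ_top (by omega)]
  ring

lemma fI_rec (m : ℕ) (y : ℝ) : fI (m+1) y = fI m (gt1 y) / 4 + (y - gt1 y / 2) := by
  induction m with
  | zero =>
    rw [fI_succ]
    have h1 : fI 0 y = y := by simp [fI]
    have h2 : gI 1 y = gt1 y := rfl
    have h3 : fI 0 (gt1 y) = gt1 y := by simp [fI]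
    rw [h1, h2, h3]
    ring
  | succ m ih =>
    rw [fI_succ (m+1) y, ih, fI_succ m (gt1 y)]
    have : gI (m+2) y = gI (m+1) (gt1 y) := rfl
    rw [this]
    ring

lemma fI_err {y : ℝ} (h : y ∈ Set.Icc (0:ℝ) 1) (m : ℕ) :
    0 ≤ fI m y - y^2 ∧ fI m y - y^2 ≤ (1/4)^(m+1) := by
  induction m generalizing y with
  | zero =>
    obtain ⟨h0, h1⟩ := h
    have h1 : fI 0 y = y := by simp [fI]
    rw [h1]
    constructor
    · nlinarith
    · have : ((1:ℝ)/4)^(0+1) = 1/4 := by norm_num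
      rw [this]; nlinarith [sq_nonneg (y - 1/2)]
  | succ m ih =>
    have hg := gt1_mem h
    obtain ⟨ihl, ihr⟩ := ih hg
    have key : fI (m+1) y - y^2 = (fI m (gt1 y) - (gt1 y)^2) / 4 := by
      rw [fI_rec]
      have := gt1_quad h
      linarith
    rw [key]
    constructor
    · linarith
    · have : (1/4:ℝ)^(m+1+1) = (1/4)^(m+1)/4 := by ring
      rw [this]; linarith

lemma fI_nonneg {y : ℝ} (h : y ∈ Set.Icc (0:ℝ) 1) (m : ℕ) : 0 ≤ fI m y := by
  have := (fI_err h m).1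
  have h0 := h.1
  nlinarith



def bias (i : ℕ) : ℝ :=
  if i = 3 ∨ i = 4 ∨ i = 5 ∨ i = 6 then 1/2 else if i = 7 ∨ i = 8 then 1 else 0

def vw (R : ℕ) (a : ℝ) : ℕ → ℕ → ℕ → ℝ := fun l i j =>
  if l = 0 then
    (if i = 1 ∧ j = 1 then 1/a else if i = 2 ∧ j = 1 then -(1/a) else 0)
  else if l = R then
    (if i = 1 then
      (if R = 1 then (if j = 1 ∨ j = 2 then a^2 else 0)
       else if j = 9 then a^2
       else if j = 3 ∨ j = 4 ∨ j = 5 ∨ j = 6 then a^2/4^(R-1)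
       else if j = 1 ∨ j = 2 ∨ j = 7 ∨ j = 8 then -(a^2/4^(R-1))
       else 0)
     else 0)
  else if l = 1 then
    (if 1 ≤ i ∧ i ≤ 9 then
      (if j = 1 ∨ j = 2 then 1
       else if j = 0 then -(bias i) else 0)
     else 0)
  else
    (if 1 ≤ i ∧ i ≤ 8 then
       (if j = 1 ∨ j = 2 ∨ j = 7 ∨ j = 8 then 1
        else if j = 3 ∨ j = 4 ∨ j = 5 ∨ j = 6 then -1
        else if j = 0 then -(bias i) else 0)
     else if i = 9 then
       (if j = 9 then 1
        else if j = 1 ∨ j = 2 ∨ j = 7 ∨ j = 8 then -(1/4^(l-1))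
        else if j = 3 ∨ j = 4 ∨ j = 5 ∨ j = 6 then 1/4^(l-1)
        else 0)
     else 0)

def Xv (x : ℝ) : ℕ → ℝ := fun j => if j = 1 then x else 0

lemma fnnNeuron_succ (d r : ℕ) (v : ℕ → ℕ → ℕ → ℝ) (x : ℕ → ℝ) (l i : ℕ) :
    fnnNeuron d r v x (l+1) i = max 0 (v l i 0 +
      ∑ j ∈ Finset.Icc 1 (if l = 0 then d else r), v l i j * fnnNeuron d r v x l j) := rfl

lemma sum9 (f : ℕ → ℝ) : ∑ j ∈ Finset.Icc 1 9, f j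
    = f 1 + f 2 + f 3 + f 4 + f 5 + f 6 + f 7 + f 8 + f 9 := by
  rw [show (Finset.Icc 1 9 : Finset ℕ) = {1,2,3,4,5,6,7,8,9} by rfl]
  simp [Finset.sum_insert, Finset.mem_insert]
  ring

lemma fnnNeuron_one (d r : ℕ) (v : ℕ → ℕ → ℕ → ℝ) (x : ℕ → ℝ) (i : ℕ) :
    fnnNeuron d r v x 1 i = max 0 (v 0 i 0 + ∑ j ∈ Finset.Icc 1 d, v 0 i j * x j) := rfl

lemma layer1 (R : ℕ) (hR : 1 ≤ R) (a x : ℝ) (i : ℕ) :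
    fnnNeuron 1 9 (vw R a) (Xv x) 1 i
      = if i = 1 then max 0 (x/a) else if i = 2 then max 0 (-(x/a)) else 0 := by
  rw [fnnNeuron_one, Finset.Icc_self, Finset.sum_singleton]
  have hx : Xv x 1 = x := by simp [Xv]
  rw [hx]
  rcases eq_or_ne i 1 with rfl | h1
  · simp only [vw, if_pos rfl]
    norm_num
    rw [div_eq_mul_inv, mul_comm]
  · rcases eq_or_ne i 2 with rfl | h2
    · simp only [vw, if_pos rfl]
      norm_num
      rw [div_eq_mul_inv, mul_comm]
    · simp [vw, h1, h2]

lemma relu_abs (t : ℝ) : max 0 t + max 0 (-t) = |t| := by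
  rcases le_total 0 t with h|h
  · rw [abs_of_nonneg h, max_eq_right h, max_eq_left (by linarith)]; ring
  · rw [abs_of_nonpos h, max_eq_left h, max_eq_right (by linarith)]; ring

lemma uw_sum (a x : ℝ) (ha : 1 ≤ a) : max 0 (x/a) + max 0 (-(x/a)) = |x|/a := by
  rw [relu_abs, abs_div, abs_of_pos (by linarith : (0:ℝ) < a)]
lemma layers (R : ℕ) (a x : ℝ) (ha : 1 ≤ a) (hx : |x| ≤ a) :
    ∀ k, 2 + k ≤ R →
      (∀ i, 1 ≤ i → i ≤ 9 →
        fnnNeuron 1 9 (vw R a) (Xv x) (2+k) i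
          = if i = 9 then fI k (|x|/a) else max 0 (gI k (|x|/a) - bias i)) := by
  have ha0 : (0:ℝ) < a := by linarith
  set y := |x|/a with hy
  have hy01 : y ∈ Set.Icc (0:ℝ) 1 := by
    constructor
    · positivity
    · rw [hy, div_le_one ha0]; exact hx
  intro k
  induction k with
  | zero =>
    intro hk i hi1 hi9
    have h2 : (2:ℕ) = 1 + 1 := rfl
    rw [show (2+0 : ℕ) = 1+1 from rfl, fnnNeuron_succ]
    have h10 : (1:ℕ) ≠ 0 := by omega
    have h1R : (1:ℕ) ≠ R := by omega
    simp only [if_neg h10]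
    rw [sum9]
    simp only [layer1 R (by omega) a x]
    norm_num
    have hv : ∀ j, vw R a 1 i j = if j = 1 ∨ j = 2 then 1 else if j = 0 then -(bias i) else 0 := by
      intro j
      simp [vw, h1R, hi1, hi9]
    simp only [hv]
    norm_num
    rw [uw_sum a x ha]
    rcases eq_or_ne i 9 with rfl | h9
    · have : bias 9 = 0 := by simp [bias]
      rw [if_pos rfl, this]
      have : fI 0 y = y := by simp [fI]
      rw [this]
      rw [max_eq_right (by linarith [hy01.1])]
      ring_nf
      rw [hy, div_eq_mul_inv]
    · rw [if_neg h9]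
      show max 0 (-bias i + y) = max 0 (gI 0 y - bias i)
      have : gI 0 y = y := rfl
      rw [this]
      ring_nf
  | succ k ih =>
    intro hk i hi1 hi9
    have hk' : 2 + k ≤ R := by omega
    set L := 2 + k with hL
    have hL0 : L ≠ 0 := by omega
    have hL1 : L ≠ 1 := by omega
    have hLR : L ≠ R := by omega
    rw [show (2+(k+1) : ℕ) = L+1 from by omega, fnnNeuron_succ]
    simp only [if_neg hL0]
    rw [sum9]
    have hN : ∀ j, 1 ≤ j → j ≤ 9 → fnnNeuron 1 9 (vw R a) (Xv x) L j
        = if j = 9 then fI k y else max 0 (gI k y - bias j) := ih hk'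
    rw [hN 1 (by omega) (by omega), hN 2 (by omega) (by omega), hN 3 (by omega) (by omega),
        hN 4 (by omega) (by omega), hN 5 (by omega) (by omega), hN 6 (by omega) (by omega),
        hN 7 (by omega) (by omega), hN 8 (by omega) (by omega), hN 9 (by omega) (by omega)]
    norm_num [bias]
    have hgy : gI (k+1) y = gt1 (gI k y) := by
      show gI k (gt1 y) = _
      exact gI_comm k y
    set G := gI k y with hG
    have hgt : gt1 G = max 0 G + max 0 G - max 0 (G - 1/2) - max 0 (G - 1/2)
        - max 0 (G - 1/2) - max 0 (G - 1/2) + max 0 (G - 1) + max 0 (G - 1) := by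
      unfold gt1; ring
    rcases eq_or_ne i 9 with rfl | h9
    · have hv : ∀ j, vw R a L 9 j = if j = 9 then 1
          else if j = 1 ∨ j = 2 ∨ j = 7 ∨ j = 8 then -(1/4^(L-1))
          else if j = 3 ∨ j = 4 ∨ j = 5 ∨ j = 6 then 1/4^(L-1)
          else 0 := by
        intro j
        simp [vw, hL0, hL1, hLR]
      simp only [hv]
      norm_num
      rw [show L - 1 = k + 1 from by omega]
      rw [show fI (k+1) y = 0 ⊔ fI (k+1) y from (max_eq_right (fI_nonneg hy01 (k+1))).symm]
      congr 1
      rw [fI_succ k y, hgy, hgt]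
      ring
    · have hi8 : i ≤ 8 := by omega
      have hv : ∀ j, vw R a L i j = if j = 1 ∨ j = 2 ∨ j = 7 ∨ j = 8 then 1
          else if j = 3 ∨ j = 4 ∨ j = 5 ∨ j = 6 then -1
          else if j = 0 then -(bias i) else 0 := by
        intro j
        simp [vw, hL0, hL1, hLR, hi1, hi8]
      simp only [hv]
      norm_num
      rw [if_neg h9]
      congr 1
      rw [hgy, hgt]
      simp only [bias]
      ring

lemma net_eval (R : ℕ) (hR : 0 < R) (a x : ℝ) (ha : 1 ≤ a) (hx : |x| ≤ a) :
    fnnEval 1 9 R (vw R a) (Xv x) = a^2 * fI (R-1) (|x|/a) := by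
  have ha0 : (0:ℝ) < a := by linarith
  set y := |x|/a with hy
  have hy01 : y ∈ Set.Icc (0:ℝ) 1 := by
    constructor
    · positivity
    · rw [hy, div_le_one ha0]; exact hx
  rcases eq_or_lt_of_le (show 1 ≤ R from hR) with h1 | h2
  · -- R = 1
    have hR1 : R = 1 := h1.symm
    subst hR1
    unfold fnnEval
    rw [sum9]
    simp only [layer1 1 (le_refl 1) a x]
    have hv : ∀ j, vw 1 a 1 1 j = if j = 1 ∨ j = 2 then a^2 else 0 := by
      intro j; simp [vw]
    simp only [hv]
    norm_num
    have hu := uw_sum a x ha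
    have : fI 0 y = y := by simp [fI]
    rw [this, hy]
    nlinarith [hu]
  · -- R ≥ 2
    have hRk : R = 2 + (R - 2) := by omega
    unfold fnnEval
    rw [sum9]
    have hN := layers R a x ha hx (R - 2) (by omega)
    rw [← hRk] at hN
    rw [hN 1 (by omega) (by omega), hN 2 (by omega) (by omega), hN 3 (by omega) (by omega),
        hN 4 (by omega) (by omega), hN 5 (by omega) (by omega), hN 6 (by omega) (by omega),
        hN 7 (by omega) (by omega), hN 8 (by omega) (by omega), hN 9 (by omega) (by omega)]
    have hR0 : R ≠ 0 := by omega
    have hR1 : R ≠ 1 := by omega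
    have hv : ∀ j, vw R a R 1 j = if j = 9 then a^2
        else if j = 3 ∨ j = 4 ∨ j = 5 ∨ j = 6 then a^2/4^(R-1)
        else if j = 1 ∨ j = 2 ∨ j = 7 ∨ j = 8 then -(a^2/4^(R-1))
        else 0 := by
      intro j; simp [vw, hR0, hR1]
    simp only [hv]
    norm_num
    set G := gI (R-2) y with hG
    have hgy : gI (R-1) y = gt1 G := by
      rw [show R - 1 = (R-2) + 1 from by omega]
      show gI (R-2) (gt1 y) = _
      exact gI_comm (R-2) y
    have hfi : fI (R-1) y = fI (R-2) y - gI (R-1) y / 4^(R-1) := by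
      rw [show R - 1 = (R-2) + 1 from by omega]
      exact fI_succ (R-2) y
    rw [hfi, hgy]
    unfold gt1
    simp only [bias]
    norm_num
    ring

lemma bias_abs (i : ℕ) : |bias i| ≤ 1 := by
  unfold bias; split_ifs <;> (rw [abs_of_nonneg (by norm_num)]; try norm_num)

lemma vw_abs (R : ℕ) (a : ℝ) (ha : 1 ≤ a) (l i j : ℕ) : |vw R a l i j| ≤ a^2 := by
  have ha0 : (0:ℝ) < a := by linarith
  have h1a : (1:ℝ) ≤ a^2 := by nlinarith
  have hinva : |1/a| ≤ 1 := by
    rw [abs_of_nonneg (by positivity)]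
    rw [div_le_one ha0]; linarith
  have h4R : (1:ℝ) ≤ 4^(R-1) := one_le_pow₀ (by norm_num)
  have h4l : (1:ℝ) ≤ 4^(l-1) := one_le_pow₀ (by norm_num)
  have hdiv : |a^2/4^(R-1)| ≤ a^2 := by
    rw [abs_of_nonneg (by positivity)]
    exact div_le_self (by positivity) h4R
  have hdivl : |(1:ℝ)/4^(l-1)| ≤ 1 := by
    rw [abs_of_nonneg (by positivity)]
    rw [div_le_one (by positivity)]; exact h4l
  have hb := bias_abs i
  simp only [vw]
  split_ifs <;>
    (try simp only [abs_neg, abs_zero, abs_one]) <;>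
    first
      | linarith
      | (rw [abs_of_nonneg (by positivity)]; try linarith)


lemma vw0_abs (R : ℕ) (a : ℝ) (ha : 1 ≤ a) (i j : ℕ) : |vw R a 0 i j| ≤ 1 := by
  have ha0 : (0:ℝ) < a := by linarith
  have hinva : |1/a| ≤ 1 := by
    rw [abs_of_nonneg (by positivity), div_le_one ha0]; linarith
  simp only [vw, if_pos rfl]
  split_ifs <;> (try simp only [abs_neg, abs_zero]) <;> first | linarith | norm_num

/-- **Lemma (approximation of the square function)**: for any `R ∈ ℕ` and `a ≥ 1` there is
a ReLU network `f̂_sq ∈ F(R, 9)` whose weight vector `v` satisfies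
`‖v‖_∞ = ‖v^{(R)}‖_∞ ≤ 4a²` and `‖v^{(0)}‖_∞ ≤ 1`, with `|f̂_sq(x) - x²| ≤ a² · 4^{-R}`
for all `x ∈ [-a, a]`. -/
theorem statement_17 (R : ℕ) (hR : 0 < R) (a : ℝ) (ha : 1 ≤ a) :
    ∃ v : ℕ → ℕ → ℕ → ℝ,
      wsup (RelW 1 9 R) v = wsup (fun l i j => RelW 1 9 R l i j ∧ l = R) v ∧
      wsup (RelW 1 9 R) v ≤ 4 * a ^ 2 ∧
      wsup (fun l i j => RelW 1 9 R l i j ∧ l = 0) v ≤ 1 ∧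
      ∀ x ∈ Set.Icc (-a) a,
        |fnnEval 1 9 R v (fun j => if j = 1 then x else 0) - x ^ 2|
          ≤ a ^ 2 * (4 : ℝ) ^ (-(R : ℤ)) := by
  have ha0 : (0:ℝ) < a := by linarith
  have hR0 : R ≠ 0 := by omega
  obtain ⟨j0, hrel, hval⟩ : ∃ j0, RelW 1 9 R R 1 j0 ∧ |vw R a R 1 j0| = a^2 := by
    rcases eq_or_ne R 1 with h1 | h1
    · refine ⟨1, Or.inr ⟨rfl, rfl, ?_⟩, ?_⟩
      · rw [if_neg hR0]; norm_num
      · subst h1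
        have : vw 1 a 1 1 1 = a^2 := by simp [vw]
        rw [this, abs_of_nonneg (by positivity)]
    · refine ⟨9, Or.inr ⟨rfl, rfl, by rw [if_neg hR0]⟩, ?_⟩
      have : vw R a R 1 9 = a^2 := by simp [vw, hR0, h1]
      rw [this, abs_of_nonneg (by positivity)]
  have hub : ∀ z ∈ {y : ℝ | ∃ l i j, RelW 1 9 R l i j ∧ y = |vw R a l i j|}, z ≤ a^2 := by
    rintro z ⟨l, i, j, -, rfl⟩
    exact vw_abs R a ha l i j
  have hub' : ∀ z ∈ {y : ℝ | ∃ l i j, (RelW 1 9 R l i j ∧ l = R) ∧ y = |vw R a l i j|},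
      z ≤ a^2 := by
    rintro z ⟨l, i, j, -, rfl⟩
    exact vw_abs R a ha l i j
  have hmem : a^2 ∈ {y : ℝ | ∃ l i j, RelW 1 9 R l i j ∧ y = |vw R a l i j|} :=
    ⟨R, 1, j0, hrel, hval.symm⟩
  have hmem' : a^2 ∈ {y : ℝ | ∃ l i j, (RelW 1 9 R l i j ∧ l = R) ∧ y = |vw R a l i j|} :=
    ⟨R, 1, j0, ⟨hrel, rfl⟩, hval.symm⟩
  have hfull : wsup (RelW 1 9 R) (vw R a) = a^2 := by
    unfold wsup
    exact le_antisymm (csSup_le ⟨a^2, hmem⟩ hub) (le_csSup ⟨a^2, hub⟩ hmem)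
  have hlast : wsup (fun l i j => RelW 1 9 R l i j ∧ l = R) (vw R a) = a^2 := by
    unfold wsup
    exact le_antisymm (csSup_le ⟨a^2, hmem'⟩ hub') (le_csSup ⟨a^2, hub'⟩ hmem')
  refine ⟨vw R a, by rw [hfull, hlast], by rw [hfull]; nlinarith, ?_, ?_⟩
  · unfold wsup
    apply csSup_le
    · exact ⟨|vw R a 0 1 0|, 0, 1, 0, ⟨Or.inl ⟨hR, le_refl 1, by norm_num, by simp⟩, rfl⟩, rfl⟩
    · rintro z ⟨l, i, j, ⟨-, rfl⟩, rfl⟩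
      exact vw0_abs R a ha i j
  · intro x hx
    have hxa : |x| ≤ a := abs_le.mpr ⟨hx.1, hx.2⟩
    have heval := net_eval R hR a x ha hxa
    show |fnnEval 1 9 R (vw R a) (Xv x) - x^2| ≤ _
    rw [heval]
    set y := |x|/a with hy
    have hy01 : y ∈ Set.Icc (0:ℝ) 1 := ⟨by positivity, by rw [hy, div_le_one ha0]; exact hxa⟩
    have hx2 : x^2 = a^2 * y^2 := by
      rw [hy, div_pow, sq_abs]; field_simp
    have herr := fI_err hy01 (R-1)
    rw [show R - 1 + 1 = R from by omega] at herr
    have h4 : (4:ℝ)^(-(R:ℤ)) = (1/4:ℝ)^R := by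
      rw [zpow_neg, zpow_natCast, one_div, inv_pow]
    rw [h4, hx2]
    rw [show a^2 * fI (R-1) y - a^2*y^2 = a^2 * (fI (R-1) y - y^2) from by ring]
    rw [abs_mul, abs_of_nonneg (by positivity : (0:ℝ) ≤ a^2)]
    have hfe : |fI (R-1) y - y^2| ≤ (1/4)^R := by
      rw [abs_of_nonneg herr.1]; exact herr.2
    have h40 : (0:ℝ) ≤ (1/4:ℝ)^R := by positivity
    nlinarith [sq_nonneg a, abs_nonneg (fI (R-1) y - y^2)]
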